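/- Let n ≥ 3 be an integer, set g = n(n−1)/2, let G_n := {(i−1)(n−1)+j : i, j ∈ ℤ, 1 ≤ i ≤ j ≤ n−1}, and let β : G_n → G_n be the bijection sending (i−1)(n−1)+j (for 1 ≤ i ≤ j ≤ n−1) to (n−j−1)(n−1)+(n+i−j−1). Then the number of pairs (x, y) ∈ G_n × G_n with x < y and β(x) > β(y) equals (g−1)g/3. -/

import Mathlib

open Finset

private def tri (m : ℕ) : Finset (ℕ × ℕ) :=
  (Finset.Icc 1 m ×ˢ Finset.Icc 1 m).filter (fun p => p.1 ≤ p.2)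

private lemma mem_tri {m : ℕ} {p : ℕ × ℕ} :
    p ∈ tri m ↔ 1 ≤ p.1 ∧ p.1 ≤ p.2 ∧ p.2 ≤ m := by
  simp only [tri, Finset.mem_filter, Finset.mem_product, Finset.mem_Icc]
  omega

private def phi (m : ℕ) (p : ℕ × ℕ) : ℕ := (p.1 - 1) * m + p.2

private lemma phi_mono {m : ℕ} {p q : ℕ × ℕ} (hp : p ∈ tri m) (hq : q ∈ tri m)
    (h : p.1 < q.1 ∨ (p.1 = q.1 ∧ p.2 < q.2)) : phi m p < phi m q := by
  rw [mem_tri] at hp hq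
  show (p.1 - 1) * m + p.2 < (q.1 - 1) * m + q.2
  rcases h with h | ⟨h1, h2⟩
  · calc (p.1 - 1) * m + p.2 < (p.1 - 1) * m + (m + q.2) :=
          Nat.add_lt_add_left (by omega) _
      _ = (p.1 - 1 + 1) * m + q.2 := by ring
      _ ≤ (q.1 - 1) * m + q.2 := by gcongr <;> omega
  · rw [h1]; omega

private lemma phi_lt_phi {m : ℕ} {p q : ℕ × ℕ} (hp : p ∈ tri m) (hq : q ∈ tri m) :
    phi m p < phi m q ↔ p.1 < q.1 ∨ (p.1 = q.1 ∧ p.2 < q.2) := by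
  constructor
  · intro h
    by_contra hc
    by_cases hpq : p = q
    · subst hpq; exact lt_irrefl _ h
    · have hne : p.1 ≠ q.1 ∨ p.2 ≠ q.2 := by
        by_contra hcc
        push_neg at hcc
        exact hpq (Prod.ext hcc.1 hcc.2)
      have : q.1 < p.1 ∨ (q.1 = p.1 ∧ q.2 < p.2) := by omega
      have := phi_mono hq hp this
      omega
  · exact phi_mono hp hq

private lemma phi_inj {m : ℕ} {p q : ℕ × ℕ} (hp : p ∈ tri m) (hq : q ∈ tri m)
    (h : phi m p = phi m q) : p = q := by
  have n1 : ¬(p.1 < q.1 ∨ (p.1 = q.1 ∧ p.2 < q.2)) := fun hx =>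
    absurd (phi_mono hp hq hx) (by omega)
  have n2 : ¬(q.1 < p.1 ∨ (q.1 = p.1 ∧ q.2 < p.2)) := fun hx =>
    absurd (phi_mono hq hp hx) (by omega)
  have e : p.1 = q.1 ∧ p.2 = q.2 := by omega
  exact Prod.ext e.1 e.2

private def tau (n : ℕ) (p : ℕ × ℕ) : ℕ × ℕ := (n - p.2, n + p.1 - p.2 - 1)

private lemma tau_fst (n : ℕ) (p : ℕ × ℕ) : (tau n p).1 = n - p.2 := rfl

private lemma tau_snd (n : ℕ) (p : ℕ × ℕ) : (tau n p).2 = n + p.1 - p.2 - 1 := rfl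

private lemma innerSumQ (a : ℕ) (ha : 1 ≤ a) (m : ℕ) :
    3 * ∑ d ∈ Finset.Icc 1 m, (d - a) * (d + 1 - a)
      = (m - a) * (m + 1 - a) * (m + 2 - a) := by
  induction m with
  | zero => simp
  | succ M ih =>
    rw [Finset.sum_Icc_succ_top (by omega), Nat.mul_add, ih]
    rcases le_or_gt a M with h | h
    · obtain ⟨k, rfl⟩ : ∃ k, M = a + k := ⟨M - a, by omega⟩
      have e1 : a + k - a = k := by omega
      have e2 : a + k + 1 - a = k + 1 := by omega
      have e3 : a + k + 2 - a = k + 2 := by omega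
      have e4 : a + k + 1 + 1 - a = k + 2 := by omega
      have e5 : a + k + 1 + 2 - a = k + 3 := by omega
      rw [e1, e2, e3, e5]
      ring
    · have e1 : M + 1 - a = 0 := by omega
      rw [e1]
      simp

private lemma sumCubeQ (N : ℕ) :
    4 * ∑ k ∈ Finset.range N, k * (k + 1) * (k + 2)
      = (N - 1) * N * (N + 1) * (N + 2) := by
  induction N with
  | zero => simp
  | succ K ih =>
    rw [Finset.sum_range_succ, Nat.mul_add, ih]
    rcases K with _ | J
    · simp
    · have e1 : J + 1 - 1 = J := rfl
      have e2 : J + 1 + 1 - 1 = J + 1 := rfl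
      rw [e1, e2]
      ring

private lemma count_Q (m : ℕ) :
    12 * ((tri m ×ˢ tri m).filter
        (fun pq => pq.1.1 ≤ pq.2.1 ∧ pq.1.2 < pq.2.2)).card
      = (m - 1) * m * (m + 1) * (m + 2) := by
  have hcard : ((tri m ×ˢ tri m).filter
        (fun pq => pq.1.1 ≤ pq.2.1 ∧ pq.1.2 < pq.2.2)).card
      = ∑ ad ∈ Finset.Icc 1 m ×ˢ Finset.Icc 1 m,
          (((tri m ×ˢ tri m).filter (fun pq => pq.1.1 ≤ pq.2.1 ∧ pq.1.2 < pq.2.2)).filter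
            (fun pq => (pq.1.1, pq.2.2) = ad)).card := by
    apply Finset.card_eq_sum_card_fiberwise
    intro pq hpq
    simp only [Finset.mem_coe, Finset.mem_filter, Finset.mem_product, mem_tri] at hpq
    simp only [Finset.mem_coe, Finset.mem_product, Finset.mem_Icc]
    omega
  have hfib : ∀ ad ∈ Finset.Icc 1 m ×ˢ Finset.Icc 1 m,
      (((tri m ×ˢ tri m).filter (fun pq => pq.1.1 ≤ pq.2.1 ∧ pq.1.2 < pq.2.2)).filter
          (fun pq => (pq.1.1, pq.2.2) = ad)).card
        = (ad.2 - ad.1) * (ad.2 + 1 - ad.1) := by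
    rintro ⟨a, d⟩ had
    rw [Finset.mem_product, Finset.mem_Icc, Finset.mem_Icc] at had
    have hset : (((tri m ×ˢ tri m).filter (fun pq => pq.1.1 ≤ pq.2.1 ∧ pq.1.2 < pq.2.2)).filter
          (fun pq => (pq.1.1, pq.2.2) = (a, d)))
        = (Finset.Ico a d ×ˢ Finset.Icc a d).image
            (fun bc => ((a, bc.1), (bc.2, d))) := by
      ext ⟨⟨x1, x2⟩, ⟨y1, y2⟩⟩
      simp only [Finset.mem_filter, Finset.mem_product, Finset.mem_image,
        Finset.mem_Ico, Finset.mem_Icc, mem_tri, Prod.mk.injEq]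
      constructor
      · rintro ⟨⟨⟨hX, hY⟩, hc1, hc2⟩, he1, he2⟩
        exact ⟨(x2, y1), ⟨⟨by omega, by omega⟩, by omega, by omega⟩,
          ⟨by omega, by omega⟩, by omega, by omega⟩
      · rintro ⟨⟨b, c⟩, ⟨⟨hb1, hb2⟩, hc1, hc2⟩, ⟨ha1, hb3⟩, hc3, hd1⟩
        refine ⟨⟨⟨⟨?_, ?_, ?_⟩, ?_, ?_, ?_⟩, ?_, ?_⟩, ?_, ?_⟩ <;> omega
    rw [hset, Finset.card_image_of_injOn, Finset.card_product, Nat.card_Ico, Nat.card_Icc]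
    intro u _ v _ h
    simp only [Prod.mk.injEq] at h
    exact Prod.ext h.1.2 h.2.1
  rw [hcard, Finset.sum_congr rfl hfib, Finset.sum_product]
  calc 12 * ∑ a ∈ Finset.Icc 1 m, ∑ d ∈ Finset.Icc 1 m, (d - a) * (d + 1 - a)
      = 4 * ∑ a ∈ Finset.Icc 1 m, 3 * ∑ d ∈ Finset.Icc 1 m, (d - a) * (d + 1 - a) := by
        rw [← Finset.mul_sum]; ring
    _ = 4 * ∑ a ∈ Finset.Icc 1 m, (m - a) * (m + 1 - a) * (m + 2 - a) := by
        congr 1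
        exact Finset.sum_congr rfl fun a ha =>
          innerSumQ a (by rw [Finset.mem_Icc] at ha; exact ha.1) m
    _ = 4 * ∑ a ∈ Finset.Icc 1 m, (m - a) * ((m - a) + 1) * ((m - a) + 2) := by
        congr 1
        apply Finset.sum_congr rfl
        intro a ha
        rw [Finset.mem_Icc] at ha
        have e1 : m + 1 - a = (m - a) + 1 := by omega
        have e2 : m + 2 - a = (m - a) + 2 := by omega
        rw [e1, e2]
    _ = 4 * ∑ k ∈ Finset.range m, k * (k + 1) * (k + 2) := by
        congr 1
        rw [← Finset.Ico_add_one_right_eq_Icc, Finset.sum_Ico_eq_sum_range]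
        calc ∑ i ∈ Finset.range m,
              ((m - (1 + i)) * ((m - (1 + i)) + 1) * ((m - (1 + i)) + 2))
            = ∑ i ∈ Finset.range m,
              ((m - 1 - i) * ((m - 1 - i) + 1) * ((m - 1 - i) + 2)) := by
              apply Finset.sum_congr rfl
              intro i _
              have e : m - (1 + i) = m - 1 - i := by omega
              rw [e]
          _ = ∑ k ∈ Finset.range m, k * (k + 1) * (k + 2) :=
              Finset.sum_range_reflect (fun k => k * (k + 1) * (k + 2)) m
    _ = (m - 1) * m * (m + 1) * (m + 2) := sumCubeQ m

theorem stmt_8 (n : ℕ) (hn : 3 ≤ n) (g : ℕ) (hg : g = n * (n - 1) / 2) (G : Set ℕ)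
    (hG : G = {m : ℕ | ∃ i j : ℤ, 1 ≤ i ∧ i ≤ j ∧ j ≤ (n : ℤ) - 1 ∧
      (m : ℤ) = (i - 1) * ((n : ℤ) - 1) + j})
    (β : ℕ → ℕ)
    (hβ : ∀ (m : ℕ) (i j : ℤ), 1 ≤ i → i ≤ j → j ≤ (n : ℤ) - 1 →
      (m : ℤ) = (i - 1) * ((n : ℤ) - 1) + j →
      (β m : ℤ) = ((n : ℤ) - j - 1) * ((n : ℤ) - 1) + ((n : ℤ) + i - j - 1)) :
    {p : ℕ × ℕ | p.1 ∈ G ∧ p.2 ∈ G ∧ p.1 < p.2 ∧ β p.2 < β p.1}.ncard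
      = (g - 1) * g / 3 := by
  set m := n - 1 with hm
  have hm2 : 2 ≤ m := by omega
  have em : (m : ℤ) = (n : ℤ) - 1 := by omega
  -- cast formula for phi
  have cphi : ∀ a b : ℕ, (a, b) ∈ tri m →
      ((phi m (a, b) : ℕ) : ℤ) = ((a : ℤ) - 1) * ((n : ℤ) - 1) + (b : ℤ) := by
    intro a b hab
    rw [mem_tri] at hab
    have e : ((a - 1 : ℕ) : ℤ) = (a : ℤ) - 1 := by omega
    have : phi m (a, b) = (a - 1) * m + b := rfl
    rw [this, Nat.cast_add, Nat.cast_mul, e, em]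
  -- beta on phi
  have hb : ∀ p ∈ tri m, β (phi m p) = phi m (tau n p) := by
    rintro ⟨a, b⟩ hp
    have hp' := mem_tri.mp hp
    have hB := hβ (phi m (a, b)) (a : ℤ) (b : ℤ)
      (by exact_mod_cast hp'.1) (by exact_mod_cast hp'.2.1) (by omega)
      (cphi a b hp)
    have htm : tau n (a, b) ∈ tri m := by
      rw [mem_tri]
      simp only [tau]
      omega
    have e2 : ((n - b : ℕ) : ℤ) = (n : ℤ) - b := by omega
    have c2 : ((phi m (tau n (a, b)) : ℕ) : ℤ)
        = ((n : ℤ) - (b : ℤ) - 1) * ((n : ℤ) - 1) + ((n : ℤ) + (a : ℤ) - (b : ℤ) - 1) := by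
      have : tau n (a, b) = (n - b, n + a - b - 1) := rfl
      rw [this, cphi (n - b) (n + a - b - 1) (by rw [mem_tri]; omega)]
      have e3 : ((n + a - b - 1 : ℕ) : ℤ) = (n : ℤ) + a - b - 1 := by omega
      rw [e2, e3]
    exact_mod_cast hB.trans c2.symm
  have htau : ∀ p ∈ tri m, tau n p ∈ tri m := by
    intro p hp
    rw [mem_tri] at hp ⊢
    simp only [tau]
    omega
  -- membership in G
  have hmemG : ∀ x : ℕ, x ∈ G ↔ ∃ p ∈ tri m, phi m p = x := by
    intro x
    rw [hG]
    simp only [Set.mem_setOf_eq]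
    constructor
    · rintro ⟨i, j, h1, h2, h3, h4⟩
      have hpmem : (i.toNat, j.toNat) ∈ tri m := by rw [mem_tri]; omega
      refine ⟨(i.toNat, j.toNat), hpmem, ?_⟩
      have := cphi i.toNat j.toNat hpmem
      have ei : ((i.toNat : ℕ) : ℤ) = i := by omega
      have ej : ((j.toNat : ℕ) : ℤ) = j := by omega
      rw [ei, ej] at this
      exact_mod_cast this.trans h4.symm
    · rintro ⟨⟨a, b⟩, hp, rfl⟩
      have hp' := mem_tri.mp hp
      exact ⟨(a : ℤ), (b : ℤ), by exact_mod_cast hp'.1, by exact_mod_cast hp'.2.1,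
        by omega, cphi a b hp⟩
  -- the set of inversions as image of a finset
  have hS : {p : ℕ × ℕ | p.1 ∈ G ∧ p.2 ∈ G ∧ p.1 < p.2 ∧ β p.2 < β p.1}
      = ↑(((tri m ×ˢ tri m).filter
            (fun pq => pq.1.1 ≤ pq.2.1 ∧ pq.1.2 < pq.2.2)).image
          (fun pq => (phi m pq.1, phi m pq.2))) := by
    ext ⟨x, y⟩
    simp only [Set.mem_setOf_eq, Finset.coe_image, Set.mem_image, Finset.mem_coe,
      Finset.mem_filter, Finset.mem_product, Prod.mk.injEq]
    constructor
    · rintro ⟨hx, hy, hxy, hbeta⟩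
      obtain ⟨X, hX, rfl⟩ := (hmemG x).mp hx
      obtain ⟨Y, hY, rfl⟩ := (hmemG y).mp hy
      refine ⟨(X, Y), ⟨⟨hX, hY⟩, ?_⟩, rfl, rfl⟩
      have l1 := (phi_lt_phi hX hY).mp hxy
      rw [hb X hX, hb Y hY] at hbeta
      have l2 := (phi_lt_phi (htau Y hY) (htau X hX)).mp hbeta
      simp only [tau_fst, tau_snd] at l2
      have hX' := mem_tri.mp hX
      have hY' := mem_tri.mp hY
      exact ((by omega : X.1 ≤ Y.1 ∧ X.2 < Y.2) : (X, Y).1.1 ≤ (X, Y).2.1 ∧ (X, Y).1.2 < (X, Y).2.2)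
    · rintro ⟨⟨X, Y⟩, ⟨⟨hX, hY⟩, hc1, hc2⟩, hex, hey⟩
      subst hex hey
      have hX' : 1 ≤ X.1 ∧ X.1 ≤ X.2 ∧ X.2 ≤ m := mem_tri.mp hX
      have hY' : 1 ≤ Y.1 ∧ Y.1 ≤ Y.2 ∧ Y.2 ≤ m := mem_tri.mp hY
      have hc1' : X.1 ≤ Y.1 := hc1
      have hc2' : X.2 < Y.2 := hc2
      refine ⟨(hmemG _).mpr ⟨X, hX, rfl⟩, (hmemG _).mpr ⟨Y, hY, rfl⟩, ?_, ?_⟩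
      · exact (phi_lt_phi hX hY).mpr (by omega)
      · rw [hb X hX, hb Y hY]
        refine (phi_lt_phi (htau Y hY) (htau X hX)).mpr ?_
        simp only [tau_fst, tau_snd]
        omega
  rw [hS, Set.ncard_coe_finset, Finset.card_image_of_injOn ?inj]
  case inj =>
    intro u hu v hv h
    simp only [Finset.coe_filter, Set.mem_setOf_eq, Finset.mem_product] at hu hv
    have h1 : phi m u.1 = phi m v.1 := congrArg Prod.fst h
    have h2 : phi m u.2 = phi m v.2 := congrArg Prod.snd h
    exact Prod.ext (phi_inj hu.1.1 hv.1.1 h1) (phi_inj hu.1.2 hv.1.2 h2)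
  -- arithmetic conclusion
  have h12 := count_Q m
  have hn' : n = m + 1 := by omega
  have e : n * m = m * (m + 1) := by rw [hn']; exact Nat.mul_comm _ _
  obtain ⟨k, hk⟩ := Nat.even_mul_succ_self m
  have h2g : 2 * g = m * (m + 1) := by
    have hgg : g = (k + k) / 2 := by rw [hg, e, hk]
    have h2 : 2 * g = k + k := by omega
    exact h2.trans hk.symm
  have hg1 : 1 ≤ g := by
    have h6 : 2 * 3 ≤ m * (m + 1) := Nat.mul_le_mul (by omega : 2 ≤ m) (by omega : 3 ≤ m + 1)
    rw [← h2g] at h6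
    omega
  have e2 : (m - 1) * (m + 2) = m * (m + 1) - 2 := by
    obtain ⟨j, hj⟩ : ∃ j, m = j + 2 := ⟨m - 2, by omega⟩
    rw [hj]
    have h1 : j + 2 - 1 = j + 1 := rfl
    rw [h1, show (j + 2) * (j + 2 + 1) = (j + 1) * (j + 2 + 2) + 2 from by ring,
      Nat.add_sub_cancel]
  have key : (m - 1) * m * (m + 1) * (m + 2) = 4 * ((g - 1) * g) := by
    calc (m - 1) * m * (m + 1) * (m + 2) = ((m - 1) * (m + 2)) * (m * (m + 1)) := by ring
      _ = (m * (m + 1) - 2) * (m * (m + 1)) := by rw [e2]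
      _ = (2 * g - 2) * (2 * g) := by rw [h2g]
      _ = (2 * (g - 1)) * (2 * g) := by rw [show 2 * g - 2 = 2 * (g - 1) from by omega]
      _ = 4 * ((g - 1) * g) := by ring
  obtain ⟨c, hc⟩ : ∃ c, (g - 1) * g = c := ⟨_, rfl⟩
  have h12c : 12 * ((tri m ×ˢ tri m).filter
      (fun pq => pq.1.1 ≤ pq.2.1 ∧ pq.1.2 < pq.2.2)).card = 4 * c := by
    rw [h12, key, hc]
  rw [hc]
  omega
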